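/- Let y_{(i),d} for i = 1,...,I and d = 1,...,J be independent Poisson random variables where y_{(i),d} has rate x_{(i)}^T b_d, under two parameter choices B = [b_1,...,b_J]^T and B' = [b'_1,...,b'_J]^T in ℝ^{J×L} with all entries at least β > 0. Suppose the covariates x_{(i)} ∈ ℝ_{≥0}^L satisfy ξ := min_i ‖x_{(i)}‖_1 > 0, and let X = [x_{(1)},...,x_{(I)}]. Then the KL divergence between the joint distribution under B and under B' is at most (‖X‖_2² / (β ξ)) · ‖B − B'‖_F², where ‖X‖_2 is the spectral norm of X. -/

import Mathlib

open Real MeasureTheory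

/-- The pmf of the Poisson distribution with rate `μ`. -/
noncomputable def poisPdf (μ : ℝ) (k : ℕ) : ℝ :=
  Real.exp (-μ) * μ ^ k / (Nat.factorial k)

lemma poisPdf_pos {μ : ℝ} (hμ : 0 < μ) (k : ℕ) : 0 < poisPdf μ k := by
  unfold poisPdf
  positivity

lemma hasSum_poisPdf {μ : ℝ} (hμ : 0 ≤ μ) : HasSum (poisPdf μ) 1 := by
  have := ProbabilityTheory.poissonPMFRealSum ⟨μ, hμ⟩
  exact this

lemma summable_poisPdf {μ : ℝ} (hμ : 0 ≤ μ) : Summable (poisPdf μ) :=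
  (hasSum_poisPdf hμ).summable

lemma tsum_poisPdf {μ : ℝ} (hμ : 0 ≤ μ) : ∑' k, poisPdf μ k = 1 :=
  (hasSum_poisPdf hμ).tsum_eq

lemma succ_mul_poisPdf {μ : ℝ} (k : ℕ) :
    ((k : ℝ) + 1) * poisPdf μ (k + 1) = μ * poisPdf μ k := by
  unfold poisPdf
  rw [Nat.factorial_succ]
  push_cast
  field_simp
  ring

lemma summable_mul_poisPdf {μ : ℝ} (hμ : 0 ≤ μ) :
    Summable (fun k : ℕ => (k : ℝ) * poisPdf μ k) := by
  rw [← summable_nat_add_iff 1]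
  have : (fun k : ℕ => ((k + 1 : ℕ) : ℝ) * poisPdf μ (k + 1)) =
      fun k : ℕ => μ * poisPdf μ k := by
    ext k; push_cast; exact succ_mul_poisPdf k
  rw [this]
  exact (summable_poisPdf hμ).mul_left μ

lemma tsum_mul_poisPdf {μ : ℝ} (hμ : 0 ≤ μ) :
    ∑' k : ℕ, (k : ℝ) * poisPdf μ k = μ := by
  rw [Summable.tsum_eq_zero_add (summable_mul_poisPdf hμ)]
  simp only [Nat.cast_zero, zero_mul, zero_add]
  have : (fun k : ℕ => ((k : ℝ) + 1) * poisPdf μ (k + 1)) =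
      fun k : ℕ => μ * poisPdf μ k := by
    ext k; exact succ_mul_poisPdf k
  push_cast
  rw [this, tsum_mul_left, tsum_poisPdf hμ, mul_one]

lemma log_poisPdf_div {μ ν : ℝ} (hμ : 0 < μ) (hν : 0 < ν) (k : ℕ) :
    Real.log (poisPdf μ k / poisPdf ν k) = (ν - μ) + k * Real.log (μ / ν) := by
  have h1 : poisPdf μ k / poisPdf ν k = Real.exp (ν - μ) * (μ / ν) ^ k := by
    unfold poisPdf
    rw [Real.exp_sub, div_pow]
    have : (Nat.factorial k : ℝ) ≠ 0 := Nat.cast_ne_zero.mpr (Nat.factorial_ne_zero k)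
    field_simp
    have e1 : rexp (-μ) * rexp μ = 1 := by rw [← Real.exp_add]; simp
    have e2 : rexp ν * rexp (-ν) = 1 := by rw [← Real.exp_add]; simp
    linear_combination e1 - e2
  rw [h1, Real.log_mul (Real.exp_ne_zero _) (by positivity), Real.log_exp, Real.log_pow]

lemma kl_single {μ ν : ℝ} (hμ : 0 < μ) (hν : 0 < ν) :
    Summable (fun k => poisPdf μ k * Real.log (poisPdf μ k / poisPdf ν k)) ∧
    ∑' k, poisPdf μ k * Real.log (poisPdf μ k / poisPdf ν k) = μ * Real.log (μ / ν) - μ + ν := by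
  have heq : (fun k => poisPdf μ k * Real.log (poisPdf μ k / poisPdf ν k)) =
      fun k : ℕ => (ν - μ) * poisPdf μ k + Real.log (μ / ν) * ((k : ℝ) * poisPdf μ k) := by
    ext k
    rw [log_poisPdf_div hμ hν]
    ring
  have hs1 : Summable fun k : ℕ => (ν - μ) * poisPdf μ k :=
    (summable_poisPdf hμ.le).mul_left _
  have hs2 : Summable fun k : ℕ => Real.log (μ / ν) * ((k : ℝ) * poisPdf μ k) :=
    (summable_mul_poisPdf hμ.le).mul_left _
  constructor
  · rw [heq]; exact hs1.add hs2
  · rw [heq, Summable.tsum_add hs1 hs2, tsum_mul_left, tsum_mul_left, tsum_poisPdf hμ.le,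
      tsum_mul_poisPdf hμ.le]
    ring

lemma kl_single_le {μ ν : ℝ} (hμ : 0 < μ) (hν : 0 < ν) :
    μ * Real.log (μ / ν) - μ + ν ≤ (μ - ν) ^ 2 / ν := by
  have h := Real.log_le_sub_one_of_pos (div_pos hμ hν)
  have h2 : μ * Real.log (μ / ν) ≤ μ * (μ / ν - 1) :=
    mul_le_mul_of_nonneg_left h hμ.le
  have h3 : μ * (μ / ν - 1) - μ + ν = (μ - ν) ^ 2 / ν := by
    field_simp
    ring
  linarith

lemma pi_prod (n : ℕ) (f : Fin n → ℕ → ℝ) (h0 : ∀ i k, 0 ≤ f i k)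
    (hf : ∀ i, Summable (f i)) :
    Summable (fun y : Fin n → ℕ => ∏ i, f i (y i)) ∧
    ∑' y : Fin n → ℕ, ∏ i, f i (y i) = ∏ i, ∑' k, f i k := by
  induction n with
  | zero =>
      simp only [Finset.univ_eq_empty, Finset.prod_empty]
      exact ⟨Summable.of_finite,
        by rw [tsum_eq_single (fun i : Fin 0 => 0)
            (fun b hb => absurd (Subsingleton.elim b _) hb)]⟩
  | succ n ih =>
      obtain ⟨hS, hT⟩ := ih (fun i => f i.succ) (fun i k => h0 _ _) (fun i => hf _)
      have hGnn : (0 : (Fin n → ℕ) → ℝ) ≤ fun z => ∏ i, f i.succ (z i) := fun z =>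
        Finset.prod_nonneg fun i _ => h0 _ _
      have hH' := (hf 0).mul_of_nonneg hS (fun k => h0 0 k) hGnn
      have hH : Summable (fun q : ℕ × (Fin n → ℕ) => f 0 q.1 * ∏ i, f i.succ (q.2 i)) := hH'
      have hcomp : (fun y : Fin (n+1) → ℕ => ∏ i, f i (y i)) =
          (fun q : ℕ × (Fin n → ℕ) => f 0 q.1 * ∏ i, f i.succ (q.2 i)) ∘
            (Fin.consEquiv (fun _ : Fin (n+1) => ℕ)).symm := by
        funext y
        simp [Fin.prod_univ_succ, Fin.tail, Fin.consEquiv]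
      constructor
      · rw [hcomp]; exact (Fin.consEquiv (fun _ : Fin (n+1) => ℕ)).symm.summable_iff.mpr hH
      · rw [hcomp]
        have h2 := (Fin.consEquiv (fun _ : Fin (n+1) => ℕ)).symm.tsum_eq
          (fun q : ℕ × (Fin n → ℕ) => f 0 q.1 * ∏ i, f i.succ (q.2 i))
        have h3 := Summable.tsum_mul_tsum (hf 0) hS hH
        calc ∑' y, ((fun q : ℕ × (Fin n → ℕ) => f 0 q.1 * ∏ i, f i.succ (q.2 i)) ∘
                (Fin.consEquiv (fun _ : Fin (n+1) => ℕ)).symm) y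
            = ∑' q : ℕ × (Fin n → ℕ), f 0 q.1 * ∏ i, f i.succ (q.2 i) := h2
          _ = (∑' k, f 0 k) * ∑' z : Fin n → ℕ, ∏ i, f i.succ (z i) := h3.symm
          _ = ∏ i, ∑' k, f i k := by rw [hT, Fin.prod_univ_succ]

lemma pi_weighted (n : ℕ) (f g : Fin n → ℕ → ℝ) (h0 : ∀ i k, 0 ≤ f i k)
    (hf : ∀ i, Summable (f i)) (h1 : ∀ i, ∑' k, f i k = 1)
    (hfg : ∀ i, Summable fun k => f i k * g i k) :
    Summable (fun y : Fin n → ℕ => (∏ i, f i (y i)) * ∑ i, g i (y i)) ∧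
    ∑' y : Fin n → ℕ, (∏ i, f i (y i)) * ∑ i, g i (y i) = ∑ i, ∑' k, f i k * g i k := by
  induction n with
  | zero =>
      simp only [Finset.univ_eq_empty, Finset.prod_empty, Finset.sum_empty, mul_zero]
      exact ⟨summable_zero, tsum_zero⟩
  | succ n ih =>
      obtain ⟨hS, hT⟩ := pi_prod n (fun i => f i.succ) (fun i k => h0 _ _) (fun i => hf _)
      have hT1 : ∑' z : Fin n → ℕ, ∏ i, f i.succ (z i) = 1 := by
        rw [hT]; simp [h1]
      obtain ⟨hW, hWT⟩ := ih (fun i => f i.succ) (fun i => g i.succ)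
        (fun i k => h0 _ _) (fun i => hf _) (fun i => h1 _) (fun i => hfg _)
      -- norm summabilities
      have hfgn : Summable (fun k => ‖f 0 k * g 0 k‖) := by
        simpa [Real.norm_eq_abs, abs_mul, Finset.abs_prod] using (hfg 0).abs
      have hf0n : Summable (fun k => ‖f 0 k‖) := by
        simpa [Real.norm_eq_abs, abs_mul, Finset.abs_prod] using (hf 0).abs
      have hSn : Summable (fun z : Fin n → ℕ => ‖∏ i, f i.succ (z i)‖) := by
        simpa [Real.norm_eq_abs, abs_mul, Finset.abs_prod] using hS.abs
      have hWn : Summable (fun z : Fin n → ℕ =>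
          ‖(∏ i, f i.succ (z i)) * ∑ i, g i.succ (z i)‖) := by
        simpa [Real.norm_eq_abs, abs_mul, Finset.abs_prod] using hW.abs
      have hA' := summable_mul_of_summable_norm hfgn hSn
      have hA : Summable (fun q : ℕ × (Fin n → ℕ) =>
          (f 0 q.1 * g 0 q.1) * ∏ i, f i.succ (q.2 i)) := hA'
      have hC' := summable_mul_of_summable_norm hf0n hWn
      have hC : Summable (fun q : ℕ × (Fin n → ℕ) =>
          f 0 q.1 * ((∏ i, f i.succ (q.2 i)) * ∑ i, g i.succ (q.2 i))) := hC'
      have hAC : Summable (fun q : ℕ × (Fin n → ℕ) =>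
          (f 0 q.1 * g 0 q.1) * (∏ i, f i.succ (q.2 i)) +
          f 0 q.1 * ((∏ i, f i.succ (q.2 i)) * ∑ i, g i.succ (q.2 i))) := hA.add hC
      have hcomp : (fun y : Fin (n+1) → ℕ => (∏ i, f i (y i)) * ∑ i, g i (y i)) =
          (fun q : ℕ × (Fin n → ℕ) =>
            (f 0 q.1 * g 0 q.1) * (∏ i, f i.succ (q.2 i)) +
            f 0 q.1 * ((∏ i, f i.succ (q.2 i)) * ∑ i, g i.succ (q.2 i))) ∘
            (Fin.consEquiv (fun _ : Fin (n+1) => ℕ)).symm := by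
        funext y
        simp only [Function.comp_apply, Fin.consEquiv, Equiv.coe_fn_symm_mk, Fin.tail,
          Fin.prod_univ_succ, Fin.sum_univ_succ]
        ring
      constructor
      · rw [hcomp]; exact (Fin.consEquiv (fun _ : Fin (n+1) => ℕ)).symm.summable_iff.mpr hAC
      · rw [hcomp]
        have h2 := (Fin.consEquiv (fun _ : Fin (n+1) => ℕ)).symm.tsum_eq (fun q : ℕ × (Fin n → ℕ) =>
            (f 0 q.1 * g 0 q.1) * (∏ i, f i.succ (q.2 i)) +
            f 0 q.1 * ((∏ i, f i.succ (q.2 i)) * ∑ i, g i.succ (q.2 i)))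
        have h3 := tsum_mul_tsum_of_summable_norm hfgn hSn
        have h4 := tsum_mul_tsum_of_summable_norm hf0n hWn
        have h5 := Summable.tsum_add hA hC
        calc ∑' y, ((fun q : ℕ × (Fin n → ℕ) =>
                (f 0 q.1 * g 0 q.1) * (∏ i, f i.succ (q.2 i)) +
                f 0 q.1 * ((∏ i, f i.succ (q.2 i)) * ∑ i, g i.succ (q.2 i))) ∘
                (Fin.consEquiv (fun _ : Fin (n+1) => ℕ)).symm) y
            = ∑' q : ℕ × (Fin n → ℕ),
                ((f 0 q.1 * g 0 q.1) * (∏ i, f i.succ (q.2 i)) +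
                f 0 q.1 * ((∏ i, f i.succ (q.2 i)) * ∑ i, g i.succ (q.2 i))) := h2
          _ = (∑' q : ℕ × (Fin n → ℕ), (f 0 q.1 * g 0 q.1) * ∏ i, f i.succ (q.2 i)) +
              ∑' q : ℕ × (Fin n → ℕ),
                f 0 q.1 * ((∏ i, f i.succ (q.2 i)) * ∑ i, g i.succ (q.2 i)) := h5
          _ = (∑' k, f 0 k * g 0 k) * (∑' z : Fin n → ℕ, ∏ i, f i.succ (z i)) +
              (∑' k, f 0 k) * ∑' z : Fin n → ℕ,
                (∏ i, f i.succ (z i)) * ∑ i, g i.succ (z i) := by rw [← h3, ← h4]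
          _ = ∑ i, ∑' k, f i k * g i k := by
              rw [hT1, h1 0, hWT, Fin.sum_univ_succ]
              ring

lemma pi_weighted' {ι : Type*} [Fintype ι] (f g : ι → ℕ → ℝ) (h0 : ∀ i k, 0 ≤ f i k)
    (hf : ∀ i, Summable (f i)) (h1 : ∀ i, ∑' k, f i k = 1)
    (hfg : ∀ i, Summable fun k => f i k * g i k) :
    Summable (fun y : ι → ℕ => (∏ i, f i (y i)) * ∑ i, g i (y i)) ∧
    ∑' y : ι → ℕ, (∏ i, f i (y i)) * ∑ i, g i (y i) = ∑ i, ∑' k, f i k * g i k := by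
  classical
  set n := Fintype.card ι
  set e := Fintype.equivFin ι with he
  obtain ⟨hS, hT⟩ := pi_weighted n (fun j => f (e.symm j)) (fun j => g (e.symm j))
    (fun j k => h0 _ _) (fun j => hf _) (fun j => h1 _) (fun j => hfg _)
  set E : (ι → ℕ) ≃ (Fin n → ℕ) := Equiv.arrowCongr e (Equiv.refl ℕ) with hE
  have hcomp : (fun y : ι → ℕ => (∏ i, f i (y i)) * ∑ i, g i (y i)) =
      (fun z : Fin n → ℕ =>
        (∏ j, f (e.symm j) (z j)) * ∑ j, g (e.symm j) (z j)) ∘ E := by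
    funext y
    simp only [Function.comp_apply, hE, Equiv.arrowCongr_apply, Equiv.refl_apply,
      Equiv.coe_refl, CompTriple.comp_eq]
    have hp := Equiv.prod_comp e.symm (fun i => f i (y i))
    have hs := Equiv.sum_comp e.symm (fun i => g i (y i))
    simp only [id]
    rw [hp, hs]
  constructor
  · rw [hcomp]; exact E.summable_iff.mpr hS
  · rw [hcomp]
    have h2 := E.tsum_eq (fun z : Fin n → ℕ =>
        (∏ j, f (e.symm j) (z j)) * ∑ j, g (e.symm j) (z j))
    have h3 := Equiv.sum_comp e.symm (fun i => ∑' k, f i k * g i k)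
    calc ∑' y, ((fun z : Fin n → ℕ =>
            (∏ j, f (e.symm j) (z j)) * ∑ j, g (e.symm j) (z j)) ∘ E) y
        = ∑' z : Fin n → ℕ,
            (∏ j, f (e.symm j) (z j)) * ∑ j, g (e.symm j) (z j) := h2
      _ = ∑ j, ∑' k, f (e.symm j) k * g (e.symm j) k := hT
      _ = ∑ i, ∑' k, f i k * g i k := h3

lemma matrix_bound (I L : ℕ) (X : Fin I → Fin L → ℝ) (c : Fin L → ℝ) :
    ∑ i, (∑ l, X i l * c l) ^ 2 ≤
      ‖LinearMap.toContinuousLinearMap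
          (Matrix.toEuclideanLin (Matrix.of fun l i => X i l))‖ ^ 2 *
        ∑ l, (c l) ^ 2 := by
  classical
  set A : Matrix (Fin L) (Fin I) ℝ := Matrix.of fun l i => X i l with hA
  set T := LinearMap.toContinuousLinearMap (Matrix.toEuclideanLin A) with hT
  set S := LinearMap.toContinuousLinearMap (Matrix.toEuclideanLin A.conjTranspose) with hS
  have hSadj : S = ContinuousLinearMap.adjoint T := by
    rw [hS, Matrix.toEuclideanLin_conjTranspose_eq_adjoint]
    exact LinearMap.adjoint_toContinuousLinearMap _
  have hnorm : ‖S‖ = ‖T‖ := by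
    rw [hSadj]
    exact ContinuousLinearMap.adjoint.norm_map T
  set v : EuclideanSpace ℝ (Fin L) := (WithLp.equiv 2 (Fin L → ℝ)).symm c with hv
  set w : EuclideanSpace ℝ (Fin I) := S v with hw
  have hwi : ∀ i, w i = ∑ l, X i l * c l := by
    intro i
    rw [hw, hS]
    simp only [LinearMap.coe_toContinuousLinearMap', hv,
      Matrix.toEuclideanLin_apply]
    simp [Matrix.mulVec, dotProduct, hA, Matrix.conjTranspose_apply]
  have hwnorm : ‖w‖ ^ 2 = ∑ i, (∑ l, X i l * c l) ^ 2 := by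
    rw [EuclideanSpace.norm_eq, Real.sq_sqrt (Finset.sum_nonneg fun i _ => sq_nonneg _)]
    exact Finset.sum_congr rfl fun i _ => by rw [Real.norm_eq_abs, sq_abs, hwi]
  have hvnorm : ‖v‖ ^ 2 = ∑ l, (c l) ^ 2 := by
    rw [EuclideanSpace.norm_eq, Real.sq_sqrt (Finset.sum_nonneg fun i _ => sq_nonneg _)]
    exact Finset.sum_congr rfl fun l _ => by rw [Real.norm_eq_abs, sq_abs]; rfl
  have hle : ‖w‖ ≤ ‖T‖ * ‖v‖ := by
    rw [hw, ← hnorm]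
    exact S.le_opNorm v
  calc ∑ i, (∑ l, X i l * c l) ^ 2 = ‖w‖ ^ 2 := hwnorm.symm
    _ ≤ (‖T‖ * ‖v‖) ^ 2 := by
        apply pow_le_pow_left₀ (norm_nonneg _) hle
    _ = ‖T‖ ^ 2 * ∑ l, (c l) ^ 2 := by rw [mul_pow, hvnorm]

/-- KL divergence bound.  Independent Poisson observations
`y (i) d ~ Poisson (x (i) ⬝ b d)` under two parameter matrices `B, B'` with all entries at
least `β > 0`; the KL divergence of the joint distributions is at most
`‖X‖₂² / (β ξ) · ‖B − B'‖_F²`. -/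
theorem kl_divergence_bound
    (I J L : ℕ) (hI : 0 < I)
    (X : Fin I → Fin L → ℝ) (hX : ∀ i l, 0 ≤ X i l)
    (B B' : Matrix (Fin J) (Fin L) ℝ) (β : ℝ) (hβ : 0 < β)
    (hB : ∀ d l, β ≤ B d l) (hB' : ∀ d l, β ≤ B' d l)
    -- ξ := minᵢ ‖x₍ᵢ₎‖₁
    (ξ : ℝ)
    (hξ : ξ = Finset.univ.inf' ⟨⟨0, hI⟩, Finset.mem_univ _⟩ (fun i => ∑ l, |X i l|))
    (hξpos : 0 < ξ)
    -- joint pmf of all the independent Poisson observations, for parameter matrix `C`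
    (p : Matrix (Fin J) (Fin L) ℝ → (Fin I → Fin J → ℕ) → ℝ)
    (hp : ∀ C y, p C y = ∏ i, ∏ d, poisPdf (∑ l, X i l * C d l) (y i d)) :
    (∑' y : Fin I → Fin J → ℕ, p B y * Real.log (p B y / p B' y)) ≤
      ‖LinearMap.toContinuousLinearMap
          (Matrix.toEuclideanLin (Matrix.of fun l i => X i l))‖ ^ 2 / (β * ξ) *
        ∑ d, ∑ l, (B d l - B' d l) ^ 2 := by
  classical
  have hβξ : 0 < β * ξ := mul_pos hβ hξpos
  set μ : Fin I → Fin J → ℝ := fun i d => ∑ l, X i l * B d l with hμdef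
  set ν : Fin I → Fin J → ℝ := fun i d => ∑ l, X i l * B' d l with hνdef
  have hrate : ∀ (C : Matrix (Fin J) (Fin L) ℝ), (∀ d l, β ≤ C d l) →
      ∀ i d, β * ξ ≤ ∑ l, X i l * C d l := by
    intro C hC i d
    have h1 : ξ ≤ ∑ l, |X i l| := by
      rw [hξ]; exact Finset.inf'_le _ (Finset.mem_univ i)
    have h2 : β * ξ ≤ β * ∑ l, |X i l| := mul_le_mul_of_nonneg_left h1 hβ.le
    have h3 : β * ∑ l, |X i l| = ∑ l, X i l * β := by
      rw [Finset.mul_sum]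
      exact Finset.sum_congr rfl fun l _ => by rw [abs_of_nonneg (hX i l)]; ring
    have h4 : ∑ l, X i l * β ≤ ∑ l, X i l * C d l :=
      Finset.sum_le_sum fun l _ => mul_le_mul_of_nonneg_left (hC d l) (hX i l)
    linarith
  have hμpos : ∀ i d, 0 < μ i d := fun i d => lt_of_lt_of_le hβξ (hrate B hB i d)
  have hνpos : ∀ i d, 0 < ν i d := fun i d => lt_of_lt_of_le hβξ (hrate B' hB' i d)
  -- set up the (i,d)-indexed family
  set f : Fin I × Fin J → ℕ → ℝ := fun q => poisPdf (μ q.1 q.2) with hfdef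
  set g : Fin I × Fin J → ℕ → ℝ :=
    fun q k => Real.log (poisPdf (μ q.1 q.2) k / poisPdf (ν q.1 q.2) k) with hgdef
  have h0 : ∀ q k, 0 ≤ f q k := fun q k => (poisPdf_pos (hμpos q.1 q.2) k).le
  have hfs : ∀ q, Summable (f q) := fun q => summable_poisPdf (hμpos q.1 q.2).le
  have h1 : ∀ q, ∑' k, f q k = 1 := fun q => tsum_poisPdf (hμpos q.1 q.2).le
  have hfg : ∀ q, Summable fun k => f q k * g q k := fun q =>
    (kl_single (hμpos q.1 q.2) (hνpos q.1 q.2)).1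
  obtain ⟨hsummable, htsum⟩ := pi_weighted' f g h0 hfs h1 hfg
  set E : ((Fin I × Fin J) → ℕ) ≃ (Fin I → Fin J → ℕ) := Equiv.curry (Fin I) (Fin J) ℕ with hE
  have hpB : ∀ z : (Fin I × Fin J) → ℕ, p B (E z) = ∏ q, f q (z q) := by
    intro z
    rw [hp, Fintype.prod_prod_type]
    rfl
  have hpB' : ∀ z : (Fin I × Fin J) → ℕ,
      p B' (E z) = ∏ q, poisPdf (ν q.1 q.2) (z q) := by
    intro z
    rw [hp, Fintype.prod_prod_type]
    rfl
  have hlog : ∀ z : (Fin I × Fin J) → ℕ,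
      Real.log (p B (E z) / p B' (E z)) = ∑ q, g q (z q) := by
    intro z
    rw [hpB, hpB', ← Finset.prod_div_distrib, Real.log_prod]
    intro q _
    exact ne_of_gt (div_pos (poisPdf_pos (hμpos q.1 q.2) _) (poisPdf_pos (hνpos q.1 q.2) _))
  have hμν : ∀ i d, μ i d - ν i d = ∑ l, X i l * (B d l - B' d l) := by
    intro i d
    rw [hμdef, hνdef]
    simp only [← Finset.sum_sub_distrib, mul_sub]
  calc (∑' y : Fin I → Fin J → ℕ, p B y * Real.log (p B y / p B' y))
      = ∑' z : (Fin I × Fin J) → ℕ, p B (E z) * Real.log (p B (E z) / p B' (E z)) :=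
        (E.tsum_eq fun y => p B y * Real.log (p B y / p B' y)).symm
    _ = ∑' z : (Fin I × Fin J) → ℕ, (∏ q, f q (z q)) * ∑ q, g q (z q) :=
        tsum_congr fun z => by rw [hlog, hpB]
    _ = ∑ q : Fin I × Fin J, ∑' k, f q k * g q k := htsum
    _ ≤ ∑ q : Fin I × Fin J, (μ q.1 q.2 - ν q.1 q.2) ^ 2 / (β * ξ) := by
        refine Finset.sum_le_sum fun q _ => ?_
        rw [(kl_single (hμpos q.1 q.2) (hνpos q.1 q.2)).2]
        refine le_trans (kl_single_le (hμpos q.1 q.2) (hνpos q.1 q.2)) ?_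
        gcongr
        exact hrate B' hB' q.1 q.2
    _ = (∑ d, ∑ i, (∑ l, X i l * (B d l - B' d l)) ^ 2) / (β * ξ) := by
        rw [← Finset.sum_div]
        congr 1
        rw [Fintype.sum_prod_type, Finset.sum_comm]
        exact Finset.sum_congr rfl fun d _ => Finset.sum_congr rfl fun i _ => by
          rw [hμν]
    _ ≤ (∑ d, ‖LinearMap.toContinuousLinearMap
          (Matrix.toEuclideanLin (Matrix.of fun l i => X i l))‖ ^ 2 *
            ∑ l, (B d l - B' d l) ^ 2) / (β * ξ) := by
        gcongr with d _
        exact matrix_bound I L X (fun l => B d l - B' d l)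
    _ = ‖LinearMap.toContinuousLinearMap
          (Matrix.toEuclideanLin (Matrix.of fun l i => X i l))‖ ^ 2 / (β * ξ) *
        ∑ d, ∑ l, (B d l - B' d l) ^ 2 := by
        rw [← Finset.mul_sum]
        ring
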